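/- arXiv:2005.04951 — 2 statements merged into one kernel-verified Lean document; each statement's English description precedes it below -/
import Mathlib

section
/- Let μ be a pattern string over an alphabet A extended by variables, containing exactly k distinct variables x_1,...,x_k (k ≥ 1), and let λ be a string over A of length n. Then the number of substitution maps assigning to each variable x_j a nonempty string κ_j over A such that simultaneously substituting κ_j for x_j in μ yields λ is at most the binomial coefficient C(n-1, k-1). -/
/-- Substitute strings for variables in a pattern over `A ⊕ X` and concatenate. -/
def patternSubst {A X : Type*} (σ : X → List A) (μ : List (A ⊕ X)) : List A :=
  μ.flatMap (Sum.elim (fun a => [a]) σ)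

/-- multiplicity of variable x in pattern μ -/
def mcount {A X : Type*} [DecidableEq X] (x : X) (μ : List (A ⊕ X)) : ℕ :=
  μ.countP (fun e => decide (e.getRight? = some x))

@[simp] theorem mcount_nil {A X : Type*} [DecidableEq X] (x : X) :
    mcount x ([] : List (A ⊕ X)) = 0 := rfl

@[simp] theorem mcount_cons_inl {A X : Type*} [DecidableEq X] (x : X) (a : A)
    (μ : List (A ⊕ X)) : mcount x (Sum.inl a :: μ) = mcount x μ := by
  simp [mcount, List.countP_cons]

@[simp] theorem mcount_cons_inr {A X : Type*} [DecidableEq X] (x y : X)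
    (μ : List (A ⊕ X)) :
    mcount x (Sum.inr y :: μ) = mcount x μ + if y = x then 1 else 0 := by
  simp [mcount, List.countP_cons]

theorem mcount_pos {A X : Type*} [DecidableEq X] {x : X} {μ : List (A ⊕ X)}
    (h : Sum.inr x ∈ μ) : 1 ≤ mcount x μ := by
  have : 0 < List.countP (fun e => decide (e.getRight? = some x)) μ :=
    List.countP_pos_iff.2 ⟨Sum.inr x, h, by simp⟩
  exact this

theorem len_formula {A X : Type*} [DecidableEq X] (τ : X → List A) (V : Finset X) :
    ∀ μ : List (A ⊕ X), (∀ x : X, Sum.inr x ∈ μ → x ∈ V) →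
    (patternSubst τ μ).length
      = μ.countP Sum.isLeft + ∑ x ∈ V, mcount x μ * (τ x).length
  | [], _ => by simp [patternSubst]
  | (Sum.inl a) :: μ, h => by
    have ih := len_formula τ V μ (fun x hx => h x (List.mem_cons_of_mem _ hx))
    simp only [patternSubst, List.flatMap_cons, List.length_append, List.countP_cons] at *
    simp only [Sum.elim_inl, List.length_singleton, ih, mcount_cons_inl]
    simp [Sum.isLeft]
    ring
  | (Sum.inr y) :: μ, h => by
    have hy : y ∈ V := h y (List.mem_cons_self)
    have ih := len_formula τ V μ (fun x hx => h x (List.mem_cons_of_mem _ hx))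
    simp only [patternSubst, List.flatMap_cons, List.length_append, List.countP_cons] at *
    simp only [Sum.elim_inr, ih, mcount_cons_inr]
    have : ∀ x ∈ V, (mcount x μ + if y = x then 1 else 0) * (τ x).length
        = mcount x μ * (τ x).length + (if x = y then (τ x).length else 0) := by
      intro x _
      by_cases hxy : x = y
      · simp [hxy, Nat.add_mul]
      · have : ¬ y = x := fun h => hxy h.symm
        simp [hxy, this]
    rw [Finset.sum_congr rfl this, Finset.sum_add_distrib, Finset.sum_ite_eq' V y]
    simp [hy, Sum.isLeft]
    ring

theorem subst_inj {A X : Type*} (τ τ' : X → List A) :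
    ∀ μ : List (A ⊕ X), (∀ x : X, Sum.inr x ∈ μ → (τ x).length = (τ' x).length) →
    patternSubst τ μ = patternSubst τ' μ →
    ∀ x : X, Sum.inr x ∈ μ → τ x = τ' x
  | [], _, _, x, hx => by simp at hx
  | (Sum.inl a) :: μ, hlen, heq, x, hx => by
    simp only [patternSubst, List.flatMap_cons, Sum.elim_inl, List.singleton_append,
      List.cons.injEq] at heq
    have := subst_inj τ τ' μ (fun x hx => hlen x (List.mem_cons_of_mem _ hx)) heq.2
    rcases List.mem_cons.1 hx with h | h
    · exact absurd h (by simp)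
    · exact this x h
  | (Sum.inr y) :: μ, hlen, heq, x, hx => by
    simp only [patternSubst, List.flatMap_cons, Sum.elim_inr] at heq
    have hl : (τ y).length = (τ' y).length := hlen y (List.mem_cons_self)
    obtain ⟨h1, h2⟩ := List.append_inj heq hl
    have := subst_inj τ τ' μ (fun x hx => hlen x (List.mem_cons_of_mem _ hx)) h2
    rcases List.mem_cons.1 hx with h | h
    · cases Sum.inr_injective h; exact h1
    · exact this x h


/-- If the pattern `μ` contains exactly the `k ≥ 1` distinct variables of
`V`, and `lam` is a string over `A` of length `n`, then the number of assignments of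
nonempty strings to the variables of `μ` whose substitution into `μ` yields `lam`
is at most `C(n-1, k-1)`. -/
theorem inst_card_le {A X : Type*} [DecidableEq X]
    (μ : List (A ⊕ X)) (lam : List A) (V : Finset X)
    (hV : ∀ x : X, Sum.inr x ∈ μ ↔ x ∈ V)
    (k : ℕ) (hk : V.card = k) (hk1 : 1 ≤ k)
    (n : ℕ) (hn : lam.length = n) :
    {σ : V → List A |
        (∀ x, σ x ≠ []) ∧
        patternSubst (fun x => if h : x ∈ V then σ ⟨x, h⟩ else []) μ = lam}.ncard
      ≤ (n - 1).choose (k - 1) := by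
  classical
  set S : Set (V → List A) := {σ : V → List A |
      (∀ x, σ x ≠ []) ∧
      patternSubst (fun x => if h : x ∈ V then σ ⟨x, h⟩ else []) μ = lam} with hS
  rcases S.eq_empty_or_nonempty with hE | ⟨σ0, hσ0⟩
  · simp [hE]
  set c : ℕ := μ.countP Sum.isLeft with hc
  set a : (V → List A) → V → ℕ := fun σ x => mcount x.1 μ * (σ x).length with ha
  have hmem : ∀ x : X, Sum.inr x ∈ μ → x ∈ V := fun x hx => (hV x).1 hx
  -- sum formula
  have hsum : ∀ σ ∈ S, c + ∑ x ∈ V.attach, a σ x = n := by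
    intro σ hσ
    have hlen := len_formula (fun x => if h : x ∈ V then σ ⟨x, h⟩ else []) V μ hmem
    rw [hσ.2, hn] at hlen
    rw [hlen]
    congr 1
    rw [← Finset.sum_attach V (fun x => mcount x μ *
      (if h : x ∈ V then σ ⟨x, h⟩ else []).length)]
    refine Finset.sum_congr rfl fun x _ => ?_
    simp [ha, x.2]
  have hapos : ∀ σ ∈ S, ∀ x : V, 1 ≤ a σ x := by
    intro σ hσ x
    have h1 : 1 ≤ mcount x.1 μ := mcount_pos ((hV x.1).2 x.2)
    have h2 : 1 ≤ (σ x).length := List.length_pos_iff.2 (hσ.1 x)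
    exact Nat.one_le_iff_ne_zero.2 (Nat.mul_ne_zero (by omega) (by omega))
  have hkcard : V.attach.card = k := by rw [Finset.card_attach, hk]
  -- n ≥ c + k
  have hnck : c + k ≤ n := by
    have := hsum σ0 hσ0
    have hle : k ≤ ∑ x ∈ V.attach, a σ0 x := by
      calc k = ∑ _x ∈ V.attach, 1 := by rw [Finset.sum_const, hkcard, smul_eq_mul, mul_one]
      _ ≤ _ := Finset.sum_le_sum fun x _ => hapos σ0 hσ0 x
    omega
  set M : ℕ := n - c - k with hM
  set g : (V → List A) → V → ℕ := fun σ x => a σ x - 1 with hg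
  have hgsum : ∀ σ ∈ S, ∑ x ∈ V.attach, g σ x = M := by
    intro σ hσ
    have h1 : ∑ x ∈ V.attach, (g σ x + 1) = ∑ x ∈ V.attach, a σ x := by
      refine Finset.sum_congr rfl fun x _ => ?_
      have := hapos σ hσ x
      simp only [hg]; omega
    rw [Finset.sum_add_distrib, Finset.sum_const, hkcard, smul_eq_mul, mul_one] at h1
    have h2 := hsum σ hσ
    omega
  -- the injection into multisets
  set F : (V → List A) → Multiset V :=
    fun σ => Finsupp.toMultiset (Finsupp.equivFunOnFinite.symm (g σ)) with hF
  have hgF : ∀ σ, ∀ x : V, (F σ).count x = g σ x := by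
    intro σ x
    rw [hF, Finsupp.count_toMultiset]
    simp
  have hinj : Set.InjOn F S := by
    intro σ hσ σ' hσ' hFeq
    have hgeq : ∀ x : V, g σ x = g σ' x := by
      intro x; rw [← hgF σ x, ← hgF σ' x, hFeq]
    have haeq : ∀ x : V, a σ x = a σ' x := by
      intro x
      have h1 := hapos σ hσ x
      have h2 := hapos σ' hσ' x
      have := hgeq x
      simp only [hg] at this
      omega
    have hleneq : ∀ x : V, (σ x).length = (σ' x).length := by
      intro x
      have hm : 0 < mcount x.1 μ := mcount_pos ((hV x.1).2 x.2)
      exact Nat.eq_of_mul_eq_mul_left hm (haeq x)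
    have hsubst := subst_inj (fun x => if h : x ∈ V then σ ⟨x, h⟩ else [])
      (fun x => if h : x ∈ V then σ' ⟨x, h⟩ else []) μ
      (fun x hx => by
        have hxV := hmem x hx
        simp only [dif_pos hxV]
        exact hleneq ⟨x, hxV⟩)
      (hσ.2.trans hσ'.2.symm)
    funext x
    have := hsubst x.1 ((hV x.1).2 x.2)
    simpa [x.2] using this
  -- cardinality of target
  have hcard_img : (F '' S).ncard = S.ncard := Set.ncard_image_of_injOn hinj
  set T : Set (Multiset V) := {m | Multiset.card m = M} with hT
  have hsub : F '' S ⊆ T := by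
    rintro _ ⟨σ, hσ, rfl⟩
    show Multiset.card (F σ) = M
    rw [hF, Finsupp.card_toMultiset, Finsupp.sum_fintype _ _ (fun _ => rfl)]
    rw [← hgsum σ hσ, ← Finset.univ_eq_attach]
    simp
  have hTfin : T.Finite := by
    have : T = Sym.toMultiset '' (Set.univ : Set (Sym V M)) := by
      ext m
      constructor
      · intro hm; exact ⟨⟨m, hm⟩, trivial, rfl⟩
      · rintro ⟨⟨m', hm'⟩, -, rfl⟩; exact hm'
    rw [this]
    exact (Set.finite_univ).image _
  have hTcard : T.ncard ≤ (k + M - 1).choose M := by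
    have hbij : T.ncard = Nat.card (Sym V M) := by
      have : T = Sym.toMultiset '' (Set.univ : Set (Sym V M)) := by
        ext m
        constructor
        · intro hm; exact ⟨⟨m, hm⟩, trivial, rfl⟩
        · rintro ⟨⟨m', hm'⟩, -, rfl⟩; exact hm'
      rw [this, Set.ncard_image_of_injective _
        (show Function.Injective (Sym.toMultiset : Sym (↥V) M → Multiset ↥V) from
          fun s t h => Subtype.ext h), Set.ncard_univ]
    rw [hbij, Nat.card_eq_fintype_card, Sym.card_sym_eq_choose, Fintype.card_coe, hk]
  have h1 : S.ncard ≤ (k + M - 1).choose M := by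
    rw [← hcard_img]
    exact le_trans (Set.ncard_le_ncard hsub hTfin) hTcard
  refine h1.trans ?_
  -- arithmetic: (k + M - 1).choose M ≤ (n-1).choose (k-1)
  have hkM : k + M = n - c := by omega
  have hcs := Nat.choose_symm (show k - 1 ≤ k + M - 1 by omega)
  rw [show k + M - 1 - (k - 1) = M from by omega] at hcs
  rw [hcs]
  exact Nat.choose_le_choose (k - 1) (by omega)
end

section
/- Consistency of purely Horn mathematical systems: Let M be a first-order system whose nonlogical axioms consist exactly of finitely many quantifier-free positive Horn formulas (iterated implications of atomic formulas), together with the equality axioms, propositional tautologies, quantifier axioms, and rules modus ponens, substitution, generalization, and a structural induction rule for the inductively defined predicates. Then M is consistent: no proof contains both a formula F and its negation ¬F. -/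
/-- Propositional functions over atoms of type `α`. -/
inductive PropForm (α : Type*) : Type _
  | var : α → PropForm α
  | neg : PropForm α → PropForm α
  | imp : PropForm α → PropForm α → PropForm α
  | biimp : PropForm α → PropForm α → PropForm α
  | conj : PropForm α → PropForm α → PropForm α
  | disj : PropForm α → PropForm α → PropForm α

def PropForm.eval {α : Type*} (v : α → Bool) : PropForm α → Bool
  | .var a => v a
  | .neg f => ! f.eval v
  | .imp f g => ! f.eval v || g.eval v
  | .biimp f g => f.eval v == g.eval v
  | .conj f g => f.eval v && g.eval v
  | .disj f g => f.eval v || g.eval v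

/-- Lists (of terms) over a constant/operation alphabet `A` and variables `V`. -/
inductive Lst (A V : Type*) : Type _
  | const : A → Lst A V
  | var : V → Lst A V
  | app : A → Lst A V → Lst A V
  | cat : Lst A V → Lst A V → Lst A V

namespace Lst

variable {A V : Type*}

def vars : Lst A V → Set V
  | const _ => ∅
  | var x => {x}
  | app _ l => l.vars
  | cat l m => l.vars ∪ m.vars

variable [DecidableEq V]

/-- Substitute the list `μ` for the variable `x`. -/
def substL (μ : Lst A V) (x : V) : Lst A V → Lst A V
  | const a => const a
  | var z => if z = x then μ else var z
  | app a l => app a (Lst.substL μ x l)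
  | cat l m => cat (Lst.substL μ x l) (Lst.substL μ x m)

end Lst

/-- Prime formulas: equations and atomic formulas over lists of terms. -/
inductive PrimeF (A V P : Type*) : Type _
  | eq : Lst A V → Lst A V → PrimeF A V P
  | pred : P → List (Lst A V) → PrimeF A V P

namespace PrimeF

variable {A V P : Type*}

def vars : PrimeF A V P → Set V
  | eq l m => l.vars ∪ m.vars
  | pred _ ls => {x | ∃ l ∈ ls, x ∈ l.vars}

variable [DecidableEq V]

def substL (μ : Lst A V) (x : V) : PrimeF A V P → PrimeF A V P
  | eq l m => eq (Lst.substL μ x l) (Lst.substL μ x m)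
  | pred p ls => pred p (ls.map (Lst.substL μ x))

end PrimeF

/-- First-order formulas over prime formulas with lists of terms as arguments. -/
inductive Fml (A V P : Type*) : Type _
  | prime : PrimeF A V P → Fml A V P
  | neg : Fml A V P → Fml A V P
  | imp : Fml A V P → Fml A V P → Fml A V P
  | biimp : Fml A V P → Fml A V P → Fml A V P
  | conj : Fml A V P → Fml A V P → Fml A V P
  | disj : Fml A V P → Fml A V P → Fml A V P
  | all : V → Fml A V P → Fml A V P
  | ex : V → Fml A V P → Fml A V P

namespace Fml

variable {A V P : Type*}

/-- All variables occurring in a formula. -/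
def vars : Fml A V P → Set V
  | prime F => F.vars
  | neg F => F.vars
  | imp F G => F.vars ∪ G.vars
  | biimp F G => F.vars ∪ G.vars
  | conj F G => F.vars ∪ G.vars
  | disj F G => F.vars ∪ G.vars
  | all x F => insert x F.vars
  | ex x F => insert x F.vars

/-- The free variables of a formula. -/
def free : Fml A V P → Set V
  | prime F => F.vars
  | neg F => F.free
  | imp F G => F.free ∪ G.free
  | biimp F G => F.free ∪ G.free
  | conj F G => F.free ∪ G.free
  | disj F G => F.free ∪ G.free
  | all x F => F.free \ {x}
  | ex x F => F.free \ {x}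

variable [DecidableEq V]

/-- Substitute the list `μ` for every free occurrence of the variable `x`. -/
def substL (μ : Lst A V) (x : V) : Fml A V P → Fml A V P
  | prime F => prime (F.substL μ x)
  | neg F => neg (Fml.substL μ x F)
  | imp F G => imp (Fml.substL μ x F) (Fml.substL μ x G)
  | biimp F G => biimp (Fml.substL μ x F) (Fml.substL μ x G)
  | conj F G => conj (Fml.substL μ x F) (Fml.substL μ x G)
  | disj F G => disj (Fml.substL μ x F) (Fml.substL μ x G)
  | all z F => if z = x then all z F else all z (Fml.substL μ x F)
  | ex z F => if z = x then ex z F else ex z (Fml.substL μ x F)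

/-- Collision-freeness of substituting the list `μ` for the variable `x`. -/
def CF (μ : Lst A V) (x : V) : Fml A V P → Prop
  | prime _ => True
  | neg F => Fml.CF μ x F
  | imp F G => Fml.CF μ x F ∧ Fml.CF μ x G
  | biimp F G => Fml.CF μ x F ∧ Fml.CF μ x G
  | conj F G => Fml.CF μ x F ∧ Fml.CF μ x G
  | disj F G => Fml.CF μ x F ∧ Fml.CF μ x G
  | all z F => x ∉ (Fml.all z F).free ∨ (z ∉ μ.vars ∧ Fml.CF μ x F)
  | ex z F => x ∉ (Fml.ex z F).free ∨ (z ∉ μ.vars ∧ Fml.CF μ x F)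

end Fml

def PropForm.toFml {A V P : Type*} : PropForm (Fml A V P) → Fml A V P
  | .var F => F
  | .neg f => .neg f.toFml
  | .imp f g => .imp f.toFml g.toFml
  | .biimp f g => .biimp f.toFml g.toFml
  | .conj f g => .conj f.toFml g.toFml
  | .disj f g => .disj f.toFml g.toFml

/-- Quantifier-free positive Horn formulas: iterated implications of prime
formulas. -/
inductive IsHorn {A V P : Type*} : Fml A V P → Prop
  | prime (F : PrimeF A V P) : IsHorn (.prime F)
  | imp (F : PrimeF A V P) {G : Fml A V P} : IsHorn G → IsHorn (.imp (.prime F) G)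

/-- The conclusion (last prime formula) of an iterated implication. -/
def Fml.concl {A V P : Type*} : Fml A V P → Fml A V P
  | .imp _ G => G.concl
  | F => F

/-- Substitute the lists `ls` for the variables `xs` (sequentially) in `G`. -/
def Fml.substMany {A V P : Type*} [DecidableEq V]
    (G : Fml A V P) (xs : List V) (ls : List (Lst A V)) : Fml A V P :=
  (xs.zip ls).foldl (fun F q => Fml.substL q.2 q.1 F) G

/-- Replace in a formula every `i`-ary prime subformula `p λ_1,...,λ_i` by
`G[λ_1/x_1,...,λ_i/x_i]`. -/
def transform {A V P : Type*} [DecidableEq V] [DecidableEq P]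
    (p : P) (i : ℕ) (xs : List V) (G : Fml A V P) : Fml A V P → Fml A V P
  | .prime (.eq l m) => .prime (.eq l m)
  | .prime (.pred q ls) =>
      if q = p ∧ ls.length = i then G.substMany xs ls else .prime (.pred q ls)
  | .neg F => .neg (transform p i xs G F)
  | .imp F G' => .imp (transform p i xs G F) (transform p i xs G G')
  | .biimp F G' => .biimp (transform p i xs G F) (transform p i xs G G')
  | .conj F G' => .conj (transform p i xs G F) (transform p i xs G G')
  | .disj F G' => .disj (transform p i xs G F) (transform p i xs G G')
  | .all z F => .all z (transform p i xs G F)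
  | .ex z F => .ex z (transform p i xs G F)

/-- The axioms of equality (3.10). -/
inductive EqAx {A V P : Type*} [DecidableEq V] : Fml A V P → Prop
  | refl (x : V) : EqAx (.prime (.eq (.var x) (.var x)))
  | substAx (x y : V) (l m : Lst A V) :
      EqAx (.imp (.prime ((PrimeF.eq l m).substL (.var x) y))
        (.imp (.prime (.eq (.var x) (.var y))) (.prime (.eq l m))))
  | predAx (p : P) (xs ys : List V) (h : xs.length = ys.length) (hne : xs ≠ []) :
      EqAx ((xs.zip ys).foldr
        (fun q F => Fml.imp (.prime (.eq (.var q.1) (.var q.2))) F)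
        (Fml.imp (.prime (.pred p (xs.map .var)))
          (.prime (.pred p (ys.map .var)))))

/-- Provability in the mathematical system with basis axioms `B`: substitution
instances of propositional tautologies, the axioms of equality, the quantifier
axioms, the basis axioms, and the rules modus ponens, collision-free substitution,
generalization and structural induction with respect to the Horn axioms `B`. -/
inductive Provable {A V P : Type*} [DecidableEq V] [DecidableEq P]
    (B : Set (Fml A V P)) : Fml A V P → Prop
  | taut (α : PropForm (Fml A V P)) (h : ∀ v, α.eval v = true) : Provable B α.toFml
  | eqax {F} (h : EqAx F) : Provable B F
  | q1 (x : V) (F : Fml A V P) : Provable B (.imp (.all x F) F)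
  | q2 (x : V) (F G : Fml A V P) (h : x ∉ F.free) :
      Provable B (.imp (.all x (.imp F G)) (.imp F (.all x G)))
  | q3 (x : V) (F : Fml A V P) :
      Provable B (.biimp (.neg (.all x (.neg F))) (.ex x F))
  | base {F} (h : F ∈ B) : Provable B F
  | mp {F G} : Provable B (.imp F G) → Provable B F → Provable B G
  | subst {F} (μ : Lst A V) (x : V) (h : F.CF μ x) :
      Provable B F → Provable B (F.substL μ x)
  | gen (x : V) {F} : Provable B F → Provable B (.all x F)
  | ind (p : P) (xs : List V) (G : Fml A V P) (hnodup : xs.Nodup)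
      (hxs : ∀ x ∈ xs, ∀ F ∈ B, x ∉ Fml.vars F)
      (hG : ∀ v ∈ G.vars, ∀ F ∈ B, v ∉ Fml.vars F)
      (h : ∀ F ∈ B,
        (∃ ls : List (Lst A V), ls.length = xs.length ∧
            Fml.concl F = .prime (.pred p ls)) →
        Provable B (transform p xs.length xs G F)) :
      Provable B (.imp (.prime (.pred p (xs.map .var))) G)

section ConsistencyProof

open Classical

variable {A V P : Type*}

/-- The sign function χ determined by a sign assignment `s` on predicate/arity
pairs: equations get `+1` (true), atoms get the sign of their pair, and the
extension to compound formulas is truth-functional with `χ(Qx F) = χ(F)`. -/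
def chi (s : P → ℕ → Bool) : Fml A V P → Bool
  | .prime (.eq _ _) => true
  | .prime (.pred p ls) => s p ls.length
  | .neg F => !chi s F
  | .imp F G => !chi s F || chi s G
  | .biimp F G => chi s F == chi s G
  | .conj F G => chi s F && chi s G
  | .disj F G => chi s F || chi s G
  | .all _ F => chi s F
  | .ex _ F => chi s F

/-- `Chain s p n F` : `F` is a Horn chain all of whose atomic premises have
pairs in `s` and whose conclusion is an atom with pair `(p, n)`. -/
inductive Chain (s : P → ℕ → Prop) (p : P) (n : ℕ) : Fml A V P → Prop
  | concl (ls : List (Lst A V)) (h : ls.length = n) :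
      Chain s p n (.prime (.pred p ls))
  | eqprem (l m : Lst A V) {G} (h : Chain s p n G) :
      Chain s p n (.imp (.prime (.eq l m)) G)
  | predprem (q : P) (ls : List (Lst A V)) {G} (hq : s q ls.length)
      (h : Chain s p n G) : Chain s p n (.imp (.prime (.pred q ls)) G)

/-- Stage-`k` productive pairs. -/
def ProdN (B : Set (Fml A V P)) : ℕ → P → ℕ → Prop
  | 0 => fun _ _ => False
  | k + 1 => fun p n => ∃ F ∈ B, Chain (ProdN B k) p n F

/-- Productive predicate/arity pairs (least fixed point over the Horn axioms). -/
def Productive (B : Set (Fml A V P)) (p : P) (n : ℕ) : Prop :=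
  ∃ k, ProdN B k p n

theorem chain_mono {s t : P → ℕ → Prop} (hst : ∀ q j, s q j → t q j)
    {p n} {F : Fml A V P} (h : Chain s p n F) : Chain t p n F := by
  induction h with
  | concl ls h => exact .concl ls h
  | eqprem l m _ ih => exact .eqprem l m ih
  | predprem q ls hq _ ih => exact .predprem q ls (hst _ _ hq) ih

theorem prodN_le {B : Set (Fml A V P)} :
    ∀ {k k'}, k ≤ k' → ∀ p n, ProdN B k p n → ProdN B k' p n := by
  intro k
  induction k with
  | zero => intro k' _ p n h; exact h.elim
  | succ k ih =>
    intro k' hk p n h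
    obtain ⟨k'', rfl⟩ := Nat.exists_eq_add_of_le hk
    obtain ⟨F, hF, hc⟩ := h
    rw [show k + 1 + k'' = (k + k'') + 1 by omega]
    show ∃ F ∈ B, Chain (ProdN B (k + k'')) p n F
    exact ⟨F, hF, chain_mono (fun q j hq => ih (by omega) q j hq) hc⟩

theorem chain_prod {B : Set (Fml A V P)} {p n} {F : Fml A V P}
    (h : Chain (Productive B) p n F) : ∃ k, Chain (ProdN B k) p n F := by
  induction h with
  | concl ls h => exact ⟨0, .concl ls h⟩
  | eqprem l m _ ih =>
    obtain ⟨k, hk⟩ := ih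
    exact ⟨k, .eqprem l m hk⟩
  | predprem q ls hq _ ih =>
    obtain ⟨k1, hk1⟩ := hq
    obtain ⟨k2, hk2⟩ := ih
    refine ⟨max k1 k2,
      .predprem q ls (prodN_le (le_max_left k1 k2) _ _ hk1)
        (chain_mono (fun a b hb => prodN_le (le_max_right k1 k2) a b hb) hk2)⟩

/-- The sign function associated with the Horn basis `B`. -/
noncomputable def chiB (B : Set (Fml A V P)) : Fml A V P → Bool :=
  chi fun q j => decide (Productive B q j)

theorem chi_substL [DecidableEq V] (s : P → ℕ → Bool) (μ : Lst A V) (x : V) :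
    ∀ F : Fml A V P, chi s (Fml.substL μ x F) = chi s F := by
  intro F
  induction F with
  | prime F' => cases F' <;> simp [Fml.substL, PrimeF.substL, chi]
  | neg F ih => simp [Fml.substL, chi, ih]
  | imp F G ihF ihG => simp [Fml.substL, chi, ihF, ihG]
  | biimp F G ihF ihG => simp [Fml.substL, chi, ihF, ihG]
  | conj F G ihF ihG => simp [Fml.substL, chi, ihF, ihG]
  | disj F G ihF ihG => simp [Fml.substL, chi, ihF, ihG]
  | all z F ih => simp only [Fml.substL]; split <;> simp [chi, ih]
  | ex z F ih => simp only [Fml.substL]; split <;> simp [chi, ih]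

theorem chi_foldl_subst [DecidableEq V] (s : P → ℕ → Bool) :
    ∀ (L : List (V × Lst A V)) (G : Fml A V P),
      chi s (L.foldl (fun F q => Fml.substL q.2 q.1 F) G) = chi s G := by
  intro L
  induction L with
  | nil => intro G; rfl
  | cons a L ih => intro G; rw [List.foldl_cons, ih, chi_substL]

theorem chi_substMany [DecidableEq V] (s : P → ℕ → Bool) (G : Fml A V P)
    (xs : List V) (ls : List (Lst A V)) :
    chi s (G.substMany xs ls) = chi s G :=
  chi_foldl_subst s _ G

theorem chi_toFml (s : P → ℕ → Bool) :
    ∀ α : PropForm (Fml A V P), chi s α.toFml = α.eval (chi s) := by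
  intro α
  induction α with
  | var F => rfl
  | neg f ih => simp [PropForm.toFml, PropForm.eval, chi, ih]
  | imp f g ihf ihg => simp [PropForm.toFml, PropForm.eval, chi, ihf, ihg]
  | biimp f g ihf ihg => simp [PropForm.toFml, PropForm.eval, chi, ihf, ihg]
  | conj f g ihf ihg => simp [PropForm.toFml, PropForm.eval, chi, ihf, ihg]
  | disj f g ihf ihg => simp [PropForm.toFml, PropForm.eval, chi, ihf, ihg]

theorem chain_concl {s : P → ℕ → Prop} {p n} {F : Fml A V P}
    (h : Chain s p n F) :
    ∃ ls : List (Lst A V), ls.length = n ∧ F.concl = .prime (.pred p ls) := by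
  induction h with
  | concl ls h => exact ⟨ls, h, rfl⟩
  | eqprem l m _ ih => exact ih
  | predprem q ls hq _ ih => exact ih

theorem chain_chi_true {B : Set (Fml A V P)} {p n} {F : Fml A V P}
    (h : Chain (Productive B) p n F) (hp : Productive B p n) :
    chiB B F = true := by
  induction h with
  | concl ls hls => simp [chiB, chi, hls, hp]
  | eqprem l m _ ih => simp [chiB, chi] at ih ⊢; simp [ih]
  | predprem q ls hq _ ih => simp [chiB, chi] at ih ⊢; simp [ih, hq]

theorem horn_chi {B : Set (Fml A V P)} {F : Fml A V P} (h : IsHorn F) :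
    chiB B F = true ∨ ∃ p n, Chain (Productive B) p n F := by
  induction h with
  | prime F' =>
    cases F' with
    | eq l m => exact Or.inl rfl
    | pred q ls => exact Or.inr ⟨q, ls.length, .concl ls rfl⟩
  | imp F' hG ih =>
    cases F' with
    | eq l m =>
      rcases ih with hchi | ⟨p, n, hc⟩
      · left; simp [chiB, chi] at hchi ⊢; simp [hchi]
      · exact Or.inr ⟨p, n, .eqprem l m hc⟩
    | pred q ls =>
      by_cases hq : Productive B q ls.length
      · rcases ih with hchi | ⟨p, n, hc⟩
        · left; simp [chiB, chi] at hchi ⊢; simp [hchi]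
        · exact Or.inr ⟨p, n, .predprem q ls hq hc⟩
      · left; simp [chiB, chi, hq]

theorem axiom_chi {B : Set (Fml A V P)} {F : Fml A V P}
    (hF : F ∈ B) (h : IsHorn F) : chiB B F = true := by
  rcases horn_chi (B := B) h with hchi | ⟨p, n, hc⟩
  · exact hchi
  · obtain ⟨k, hk⟩ := chain_prod hc
    exact chain_chi_true hc ⟨k + 1, F, hF, hk⟩

theorem transform_key [DecidableEq V] [DecidableEq P] {B : Set (Fml A V P)}
    {p : P} {n k : ℕ} {F : Fml A V P}
    (hc : Chain (ProdN B k) p n F) (hk : ¬ ProdN B k p n)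
    (G : Fml A V P) (xs : List V)
    (ht : chiB B (transform p n xs G F) = true) : chiB B G = true := by
  induction hc with
  | concl ls hls =>
    rw [show transform p n xs G (.prime (.pred p ls)) = G.substMany xs ls by
      simp [transform, hls]] at ht
    rwa [chiB, chi_substMany] at ht
  | eqprem l m _ ih =>
    apply ih
    simpa [chiB, chi, transform] using ht
  | predprem q ls hq _ ih =>
    apply ih
    have hne : ¬ (q = p ∧ ls.length = n) := by
      rintro ⟨rfl, h⟩
      exact hk (h ▸ hq)
    have hqp : Productive B q ls.length := ⟨k, hq⟩
    simp only [transform] at ht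
    rw [if_neg hne] at ht
    simp [chiB, chi, hqp] at ht ⊢
    simpa [chiB] using ht

theorem ind_key [DecidableEq V] [DecidableEq P] {B : Set (Fml A V P)}
    (p : P) (n : ℕ) (G : Fml A V P) (xs : List V)
    (h' : ∀ F ∈ B,
      (∃ ls : List (Lst A V), ls.length = n ∧
          Fml.concl F = .prime (.pred p ls)) →
      chiB B (transform p n xs G F) = true) :
    ∀ k, ProdN B k p n → chiB B G = true := by
  intro k
  induction k with
  | zero => intro h; exact h.elim
  | succ k ih =>
    rintro ⟨F, hF, hc⟩
    by_cases hk : ProdN B k p n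
    · exact ih hk
    · obtain ⟨ls, hls, hconcl⟩ := chain_concl hc
      exact transform_key hc hk G xs (h' F hF ⟨ls, hls, hconcl⟩)

theorem chi_provable [DecidableEq V] [DecidableEq P] {B : Set (Fml A V P)}
    (hhorn : ∀ F ∈ B, IsHorn F) {F : Fml A V P} (h : Provable B F) :
    chiB B F = true := by
  induction h with
  | taut α h => rw [chiB, chi_toFml]; exact h _
  | eqax h =>
    cases h with
    | refl x => rfl
    | substAx x y l m => rfl
    | predAx p xs ys hlen hne =>
      have base : chiB B (Fml.imp (.prime (.pred p (xs.map .var)))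
          (.prime (.pred p (ys.map .var)))) = true := by
        simp [chiB, chi, hlen]
      generalize Fml.imp (.prime (.pred p (xs.map Lst.var)))
          (.prime (.pred p (ys.map Lst.var))) = base' at base ⊢
      induction xs.zip ys with
      | nil => simpa using base
      | cons a L ih =>
        rw [List.foldr_cons]
        have := ih
        simp [chiB, chi] at this ⊢
        simpa [chiB] using this
  | q1 x F => simp [chiB, chi]
  | q2 x F G h => simp [chiB, chi]; cases chi _ F <;> cases chi _ G <;> simp
  | q3 x F => simp [chiB, chi]
  | base hF => exact axiom_chi hF (hhorn _ hF)
  | mp _ _ ihFG ihF =>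
    simp [chiB, chi] at ihFG
    rcases ihFG with h1 | h1
    · rw [chiB] at ihF; rw [ihF] at h1; exact absurd h1 (by simp)
    · simpa [chiB] using h1
  | subst μ x h _ ih => rw [chiB, chi_substL]; exact ih
  | gen x _ ih => exact ih
  | ind p xs G hnodup hxs hG h ih =>
    simp only [chiB, chi, List.length_map]
    by_cases hp : Productive B p xs.length
    · obtain ⟨k, hk⟩ := hp
      have := ind_key p xs.length G xs (fun F hF hex => ih F hF hex) k hk
      simp [chiB] at this
      simp [this]
    · simp [hp]

end ConsistencyProof

/-- Consistency of purely Horn mathematical systems: If the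
nonlogical basis axioms `B` consist of finitely many quantifier-free positive Horn
formulas, then the system is consistent: no formula is provable together with its
negation. -/
theorem horn_system_consistent {A V P : Type*} [DecidableEq V] [DecidableEq P]
    (B : Set (Fml A V P)) (hfin : B.Finite) (hhorn : ∀ F ∈ B, IsHorn F) :
    ¬ ∃ F : Fml A V P, Provable B F ∧ Provable B (.neg F) := by
  rintro ⟨F, hF, hnF⟩
  have h1 := chi_provable hhorn hF
  have h2 := chi_provable hhorn hnF
  simp [chiB, chi] at h2
  rw [chiB] at h1
  rw [h1] at h2
  exact absurd h2 (by simp)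
end
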